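/- Let p(0) = 1 and, for n ≥ 1, p(2n) = (1/2)[P_{n-1}(0)^2 + P_n(0)^2] with p(2n+1) = 0 (odd-index terms vanish). Then for real z with 0 ≤ z < 1, ∑_{n=0}^{∞} p(n) z^n = ((1+z²)/π) K(z²) + 1/2, where K is the complete elliptic integral of the first kind. -/

import Mathlib

open Finset

/-- Jacobi polynomial `P^{(α,β)}_n(x)` defined via the terminating
hypergeometric representation
`P^{(α,β)}_n(x) = (Γ(n+α+1)/(Γ(n+1)Γ(α+1))) ₂F₁(-n, n+α+β+1; α+1; (1-x)/2)`. -/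
noncomputable def jacobiP (α β : ℝ) (n : ℕ) (x : ℝ) : ℝ :=
  (Real.Gamma (n + α + 1) / (Real.Gamma (n + 1) * Real.Gamma (α + 1))) *
    ∑ k ∈ Finset.range (n + 1),
      (-1 : ℝ) ^ k * (n.choose k) *
        ((ascPochhammer ℝ k).eval (n + α + β + 1) / (ascPochhammer ℝ k).eval (α + 1)) *
        ((1 - x) / 2) ^ k

/-- Legendre polynomial, normalized so that `P_n(1) = 1`. -/
noncomputable def legendreP (n : ℕ) (x : ℝ) : ℝ := jacobiP 0 0 n x

/-- Complete elliptic integral of the first kind. -/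
noncomputable def ellipticK (k : ℝ) : ℝ :=
  ∫ θ in (0 : ℝ)..(Real.pi / 2), 1 / Real.sqrt (1 - k ^ 2 * Real.sin θ ^ 2)

/-- Return probability  of the 1D Hadamard walk at time . -/
noncomputable def hadamardReturnProbTime (n : ℕ) : ℝ :=
  if n = 0 then 1
  else if n % 2 = 0 then (1 / 2) * (legendreP (n / 2 - 1) 0 ^ 2 + legendreP (n / 2) 0 ^ 2)
  else 0

noncomputable def cc (m : ℕ) : ℝ := (Nat.centralBinom m : ℝ) / 4 ^ m

lemma cc_zero : cc 0 = 1 := by simp [cc]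

lemma cc_pos (m : ℕ) : 0 < cc m := by
  have h : (0:ℝ) < Nat.centralBinom m := by exact_mod_cast Nat.centralBinom_pos m
  have h4 : (0:ℝ) < 4 ^ m := by positivity
  exact div_pos h h4

lemma cc_rec (m : ℕ) : (2*(m:ℝ)+2) * cc (m+1) = (2*↑m+1) * cc m := by
  have h' : ((m:ℝ)+1) * (Nat.centralBinom (m+1) : ℝ)
      = 2*(2*(m:ℝ)+1) * (Nat.centralBinom m : ℝ) := by
    exact_mod_cast Nat.succ_mul_centralBinom_succ m
  have e1 : (2*(m:ℝ)+2) * cc (m+1) = ((2*(m:ℝ)+2) * Nat.centralBinom (m+1)) / 4^(m+1) := by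
    rw [cc]; ring
  have e2 : (2*(m:ℝ)+1) * cc m = ((2*(m:ℝ)+1) * Nat.centralBinom m) / 4^m := by
    rw [cc]; ring
  rw [e1, e2, div_eq_div_iff (by positivity) (by positivity), pow_succ]
  linear_combination (2*(4:ℝ)^m) * h'

lemma cc_le_one (m : ℕ) : cc m ≤ 1 := by
  induction m with
  | zero => simp [cc]
  | succ k ih =>
    have h := cc_rec k
    nlinarith [cc_pos (k+1), cc_pos k]

lemma ccCauchy (n : ℕ) : ∑ k ∈ range (n+1), cc k * cc (n - k) = 1 := by
  induction n with
  | zero => simp [cc_zero]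
  | succ n ih =>
    have g : ℕ → ℝ := fun k => (k:ℝ) * cc k * cc (n+1-k)
    have step : ∀ k ∈ range (n+1),
        ((n:ℝ)+1) * (cc k * cc (n+1-k)) - ((n:ℝ)+1) * (cc k * cc (n-k))
        = -((((k:ℕ)+1:ℕ):ℝ) * cc (k+1) * cc (n+1-(k+1))
            - (k:ℝ) * cc k * cc (n+1-k)) := by
      intro k hk
      have hk' : k ≤ n := Nat.lt_succ_iff.mp (mem_range.mp hk)
      obtain ⟨a, ha1, ha2⟩ : ∃ a, n - k = a ∧ n = k + a :=
        ⟨n - k, rfl, (Nat.add_sub_cancel' hk').symm⟩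
      have e1 : n + 1 - k = a + 1 := by omega
      have e2 : n + 1 - (k+1) = a := by omega
      have hcast : (n:ℝ) = (k:ℝ) + (a:ℝ) := by exact_mod_cast congrArg Nat.cast ha2
      rw [ha1, e1, e2, hcast]
      have hka : (2*(k:ℝ)+2) * cc (k+1) = (2*↑k+1) * cc k := cc_rec k
      have haa : (2*(a:ℝ)+2) * cc (a+1) = (2*↑a+1) * cc a := cc_rec a
      push_cast
      linear_combination (cc a / 2) * hka + (cc k / 2) * haa
    have tel : ∑ k ∈ range (n+1),
        ((((k:ℕ)+1:ℕ):ℝ) * cc (k+1) * cc (n+1-(k+1)) - (k:ℝ) * cc k * cc (n+1-k))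
        = (((n:ℕ)+1:ℕ):ℝ) * cc (n+1) * cc (n+1-(n+1)) - ((0:ℕ):ℝ) * cc 0 * cc (n+1-0) :=
      Finset.sum_range_sub (fun k => (k:ℝ) * cc k * cc (n+1-k)) (n+1)
    have key : ((n:ℝ)+1) * (∑ k ∈ range (n+1), cc k * cc (n+1-k))
        - ((n:ℝ)+1) * (∑ k ∈ range (n+1), cc k * cc (n-k))
        = -(((n:ℝ)+1) * cc (n+1)) := by
      rw [Finset.mul_sum, Finset.mul_sum, ← Finset.sum_sub_distrib,
        Finset.sum_congr rfl step, Finset.sum_neg_distrib, tel]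
      simp [cc_zero]
    have hne : ((n:ℝ)+1) ≠ 0 := by positivity
    have hmain : ∑ k ∈ range (n+1), cc k * cc (n+1-k) = 1 - cc (n+1) := by
      rw [ih, mul_one] at key
      have h2 : ((n:ℝ)+1) * (∑ k ∈ range (n+1), cc k * cc (n+1-k))
          = ((n:ℝ)+1) * (1 - cc (n+1)) := by ring_nf; ring_nf at key; linarith
      exact mul_left_cancel₀ hne h2
    rw [Finset.sum_range_succ, hmain]
    simp [cc_zero]

lemma summable_cc {x : ℝ} (hx0 : 0 ≤ x) (hx1 : x < 1) :
    Summable (fun m => cc m * x ^ m) := by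
  refine Summable.of_nonneg_of_le (fun m => mul_nonneg (cc_pos m).le (by positivity)) (fun m => ?_)
    (summable_geometric_of_lt_one hx0 hx1)
  have := cc_le_one m
  have hxp : (0:ℝ) ≤ x ^ m := by positivity
  nlinarith

lemma binom_hasSum {x : ℝ} (hx0 : 0 ≤ x) (hx1 : x < 1) :
    HasSum (fun m => cc m * x ^ m) (1 / Real.sqrt (1 - x)) := by
  have hs := summable_cc hx0 hx1
  have hnorm : Summable fun m => ‖cc m * x ^ m‖ := by
    refine hs.congr fun m => ?_
    rw [Real.norm_eq_abs, abs_of_nonneg (mul_nonneg (cc_pos m).le (by positivity))]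
  have hmul := tsum_mul_tsum_eq_tsum_sum_range_of_summable_norm hnorm hnorm
  have hterm : ∀ n : ℕ, ∑ k ∈ range (n+1), (cc k * x ^ k) * (cc (n-k) * x ^ (n-k))
      = x ^ n := by
    intro n
    have : ∀ k ∈ range (n+1), (cc k * x ^ k) * (cc (n-k) * x ^ (n-k))
        = (cc k * cc (n-k)) * x ^ n := by
      intro k hk
      have hk' : k ≤ n := Nat.lt_succ_iff.mp (mem_range.mp hk)
      rw [show (cc k * x ^ k) * (cc (n-k) * x ^ (n-k))
          = (cc k * cc (n-k)) * (x ^ k * x ^ (n-k)) by ring,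
        ← pow_add, Nat.add_sub_cancel' hk']
    rw [Finset.sum_congr rfl this, ← Finset.sum_mul, ccCauchy n, one_mul]
  simp_rw [hterm] at hmul
  rw [tsum_geometric_of_lt_one hx0 hx1] at hmul
  have h1x : (0:ℝ) < 1 - x := by linarith
  have hfpos : (1:ℝ) ≤ ∑' m, cc m * x ^ m := by
    have h := Summable.le_tsum hs 0 (fun j _ => mul_nonneg (cc_pos j).le (by positivity))
    simpa [cc_zero] using h
  have hfs : ∑' m, cc m * x ^ m = 1 / Real.sqrt (1 - x) := by
    have hnn : (0:ℝ) ≤ ∑' m, cc m * x ^ m := le_trans one_pos.le hfpos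
    calc ∑' m, cc m * x ^ m = Real.sqrt ((∑' m, cc m * x ^ m)^2) :=
          (Real.sqrt_sq hnn).symm
      _ = Real.sqrt ((1-x)⁻¹) := by rw [sq, hmul]
      _ = 1 / Real.sqrt (1 - x) := by rw [Real.sqrt_inv, one_div]
  exact hfs ▸ hs.hasSum

section WallisSection
open Real MeasureTheory intervalIntegral

lemma prod_eq (m : ℕ) : ∏ i ∈ range m, (2*(i:ℝ)+1)/(2*i+2) = cc m := by
  induction m with
  | zero => simp [cc_zero]
  | succ k ih =>
    rw [Finset.prod_range_succ, ih]
    have h := cc_rec k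
    have hne : (2*(k:ℝ)+2) ≠ 0 := by positivity
    field_simp
    linarith [cc_rec k]

lemma wallis (m : ℕ) : ∫ θ in (0:ℝ)..(π/2), sin θ ^ (2*m) = π/2 * cc m := by
  have h2 : (∫ θ in (0:ℝ)..π, sin θ ^ (2*m)) = π * cc m := by
    rw [integral_sin_pow_even, prod_eq]
  have hcont : ∀ a b : ℝ, IntervalIntegrable (fun θ => sin θ ^ (2*m)) volume a b :=
    fun a b => (Real.continuous_sin.pow _).intervalIntegrable a b
  have hsymm : (∫ θ in (π/2:ℝ)..π, sin θ ^ (2*m)) = ∫ θ in (0:ℝ)..(π/2), sin θ ^ (2*m) := by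
    have h := intervalIntegral.integral_comp_sub_left (a := (0:ℝ)) (b := π/2)
      (fun θ => sin θ ^ (2*m)) π
    simp only [Real.sin_pi_sub] at h
    rw [h]
    norm_num
    rw [show π - π/2 = π/2 by ring]
  have hadd := intervalIntegral.integral_add_adjacent_intervals
    (hcont 0 (π/2)) (hcont (π/2) π)
  rw [hsymm] at hadd
  linarith [hadd, h2]

lemma keyK {t : ℝ} (h0 : 0 ≤ t) (h1 : t < 1) :
    (∫ θ in (0:ℝ)..(π/2), 1 / Real.sqrt (1 - t * sin θ ^ 2))
      = π/2 * ∑' m : ℕ, cc m ^ 2 * t ^ m := by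
  set μ := volume.restrict (Set.Ioc (0:ℝ) (π/2)) with hμ
  set F : ℕ → ℝ → ℝ := fun m θ => cc m * t ^ m * sin θ ^ (2*m) with hF
  have hFc : ∀ m, Continuous (F m) := fun m => by
    exact continuous_const.mul (Real.continuous_sin.pow _)
  have hFnn : ∀ m θ, 0 ≤ F m θ := fun m θ => by
    have := cc_pos m
    have : (0:ℝ) ≤ sin θ ^ (2*m) := by rw [pow_mul]; positivity
    positivity
  have hint : ∀ m : ℕ, Integrable (F m) μ :=
    fun m => (hFc m).integrableOn_Ioc
  have hval : ∀ m : ℕ, ∫ θ, F m θ ∂μ = π/2 * (cc m ^ 2 * t ^ m) := by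
    intro m
    have : ∫ θ, F m θ ∂μ = ∫ θ in (0:ℝ)..(π/2), F m θ := by
      rw [intervalIntegral.integral_of_le (by positivity)]
    rw [this, hF]
    simp only
    rw [intervalIntegral.integral_const_mul, wallis]
    ring
  have hnormval : ∀ m : ℕ, (∫ θ, ‖F m θ‖ ∂μ) = π/2 * (cc m ^ 2 * t ^ m) := by
    intro m
    rw [← hval m]
    congr 1; ext θ; exact Real.norm_of_nonneg (hFnn m θ)
  have hsummable : Summable fun m : ℕ => π/2 * (cc m ^ 2 * t ^ m) := by
    apply Summable.mul_left
    refine Summable.of_nonneg_of_le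
      (fun m => by have := (cc_pos m).le; positivity)
      (fun m => ?_) (summable_geometric_of_lt_one h0 h1)
    have h := cc_le_one m
    have h' := (cc_pos m).le
    have : cc m ^ 2 ≤ 1 := by nlinarith
    have htp : (0:ℝ) ≤ t ^ m := by positivity
    nlinarith
  have hsum := MeasureTheory.hasSum_integral_of_summable_integral_norm hint
    (by simpa only [hnormval] using hsummable)
  have hpt : ∀ θ : ℝ, (∑' m, F m θ) = 1 / Real.sqrt (1 - t * sin θ ^ 2) := by
    intro θ
    have hx0 : 0 ≤ t * sin θ ^ 2 := mul_nonneg h0 (sq_nonneg _)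
    have hx1 : t * sin θ ^ 2 < 1 := by
      have hs : sin θ ^ 2 ≤ 1 := sin_sq_le_one θ
      nlinarith
    have hb := (binom_hasSum hx0 hx1).tsum_eq
    rw [← hb]
    congr 1; ext m
    rw [hF]; simp only
    rw [mul_pow, pow_mul]
    ring
  simp only [hval] at hsum
  rw [intervalIntegral.integral_of_le (by positivity : (0:ℝ) ≤ π/2)]
  have : ∫ θ, (∑' m, F m θ) ∂μ = ∫ θ in Set.Ioc (0:ℝ) (π/2), 1 / Real.sqrt (1 - t * sin θ ^ 2) := by
    rw [hμ]; congr 1; ext θ; exact hpt θ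
  rw [← this, ← hsum.tsum_eq, tsum_mul_left]

end WallisSection

lemma legendre_zero_sum (n : ℕ) : legendreP n 0 =
    ∑ k ∈ range (n+1), (-1:ℝ)^k * (n.choose k) * ((n+k).choose k) * (1/2)^k := by
  unfold legendreP jacobiP
  have hpre : Real.Gamma ((n:ℝ) + 0 + 1) / (Real.Gamma ((n:ℝ) + 1) * Real.Gamma (0 + 1)) = 1 := by
    rw [add_zero, zero_add, Real.Gamma_one, mul_one, div_self]
    rw [Real.Gamma_nat_eq_factorial]
    exact_mod_cast Nat.cast_ne_zero.mpr (Nat.factorial_ne_zero n)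
  rw [hpre, one_mul]
  refine Finset.sum_congr rfl fun k hk => ?_
  have hnum : (ascPochhammer ℝ k).eval ((n:ℝ) + 0 + 0 + 1) = ((n+k).choose k : ℝ) * (Nat.factorial k : ℝ) := by
    have h1 : ((n:ℝ) + 0 + 0 + 1) = (((n+1 : ℕ) : ℕ) : ℝ) := by push_cast; ring
    rw [h1, ← ascPochhammer_eval_cast, ascPochhammer_nat_eq_ascFactorial,
      Nat.ascFactorial_eq_factorial_mul_choose]
    push_cast; ring
  have hden : (ascPochhammer ℝ k).eval ((0:ℝ) + 1) = ((Nat.factorial k : ℕ) : ℝ) := by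
    rw [zero_add, ascPochhammer_eval_one]
  rw [hnum, hden]
  have hfac : ((Nat.factorial k : ℕ) : ℝ) ≠ 0 := by exact_mod_cast Nat.factorial_ne_zero k
  field_simp
  rw [sub_zero]


lemma bin_half (N : ℕ) : ∑ i ∈ range (N+1), (-1/2:ℝ)^i * (N.choose i) = (1/2)^N := by
  have h := add_pow (-1/2 : ℝ) 1 N
  simp only [one_pow, mul_one] at h
  norm_num at h
  rw [h]
  refine Finset.sum_congr rfl fun i _ => by norm_num

lemma innerSumAux (n j : ℕ) (hj : j ≤ n) :
    ∑ k ∈ range (n+1), (-1:ℝ)^k * (n.choose k) * (k.choose j) * (1/2)^k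
      = (-1:ℝ)^j * (n.choose j) * (1/2)^n := by
  have hsub : Finset.Ico j (n+1) ⊆ range (n+1) := by
    intro x hx; simp only [Finset.mem_Ico] at hx; exact Finset.mem_range.mpr hx.2
  have hzero : ∀ k ∈ range (n+1), k ∉ Finset.Ico j (n+1) →
      (-1:ℝ)^k * (n.choose k) * (k.choose j) * (1/2)^k = 0 := by
    intro k hk hk'
    have : k < j := by
      simp only [Finset.mem_Ico, not_and, not_lt] at hk'
      by_contra h
      exact absurd (hk' (le_of_not_gt h)) (not_le.mpr (Finset.mem_range.mp hk))
    rw [Nat.choose_eq_zero_of_lt this]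
    simp
  rw [← Finset.sum_subset hsub hzero, Finset.sum_Ico_eq_sum_range]
  have hrange : n + 1 - j = (n - j) + 1 := by omega
  rw [hrange]
  have hterm : ∀ i ∈ range ((n-j)+1),
      (-1:ℝ)^(j+i) * (n.choose (j+i)) * ((j+i).choose j) * (1/2)^(j+i)
      = ((-1:ℝ)^j * (n.choose j) * (1/2)^j) * ((-1/2:ℝ)^i * ((n-j).choose i)) := by
    intro i hi
    have hi' : i ≤ n - j := Nat.lt_succ_iff.mp (Finset.mem_range.mp hi)
    have hkn : j + i ≤ n := by omega
    have hmul := Nat.choose_mul (n := n) (Nat.le_add_right j i)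
    have : (j+i) - j = i := by omega
    rw [this] at hmul
    have hc : ((n.choose (j+i) : ℝ)) * ((j+i).choose j) = (n.choose j : ℝ) * ((n-j).choose i) := by
      exact_mod_cast congrArg Nat.cast hmul
    rw [pow_add, pow_add, show (-1/2:ℝ) = -1 * (1/2) by norm_num, mul_pow]
    linear_combination ((-1:ℝ)^j * (-1:ℝ)^i * (1/2:ℝ)^j * (1/2:ℝ)^i) * hc
  rw [Finset.sum_congr rfl hterm, ← Finset.mul_sum, bin_half]
  have hpow : (1/2:ℝ)^j * (1/2:ℝ)^(n-j) = (1/2)^n := by rw [← pow_add]; congr 1; omega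
  linear_combination ((-1:ℝ)^j * (n.choose j : ℝ)) * hpow

open Polynomial in
lemma alt_sq_sum (n : ℕ) :
    ∑ ij ∈ Finset.HasAntidiagonal.antidiagonal n, (-1:ℝ)^ij.2 * (n.choose ij.1) * (n.choose ij.2)
      = if n % 2 = 0 then (-1:ℝ)^(n/2) * (n.choose (n/2)) else 0 := by
  have hcoeff : (((X + C (-1:ℝ))^n * (X + 1)^n).coeff n)
      = ∑ ij ∈ Finset.HasAntidiagonal.antidiagonal n, (-1:ℝ)^ij.2 * (n.choose ij.1) * (n.choose ij.2) := by
    rw [Polynomial.coeff_mul]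
    refine Finset.sum_congr rfl fun ij hij => ?_
    have hij' : ij.1 + ij.2 = n := Finset.HasAntidiagonal.mem_antidiagonal.mp hij
    rw [Polynomial.coeff_X_add_C_pow, Polynomial.coeff_X_add_one_pow]
    have h2 : n - ij.1 = ij.2 := by omega
    rw [h2]
  have hprod : (X + C (-1:ℝ))^n * (X + 1)^n = (X^2 + C (-1:ℝ))^n := by
    rw [← mul_pow]
    congr 1
    simp only [map_neg, Polynomial.C_1]
    ring
  have hX2 : ((X^2 + C (-1:ℝ))^n).coeff n
      = if n % 2 = 0 then (-1:ℝ)^(n/2) * (n.choose (n/2)) else 0 := by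
    rw [add_pow, Polynomial.finset_sum_coeff]
    have hterm : ∀ i ∈ range (n+1),
        (((X:ℝ[X])^2)^i * (C (-1:ℝ))^(n-i) * (n.choose i : ℝ[X])).coeff n
        = if n = 2*i then (-1:ℝ)^(n-i) * (n.choose i) else 0 := by
      intro i _
      rw [← pow_mul, ← Polynomial.C_pow, ← Polynomial.C_eq_natCast, mul_assoc, ← Polynomial.C_mul,
        Polynomial.coeff_mul_C, Polynomial.coeff_X_pow]
      split <;> simp_all
    rw [Finset.sum_congr rfl hterm]
    by_cases h : n % 2 = 0
    · rw [Finset.sum_eq_single (n/2)]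
      · have he : n = 2 * (n/2) := by omega
        rw [if_pos he, if_pos h]
        congr 2
        omega
      · intro i _ hne
        rw [if_neg (by omega)]
      · intro habs
        exact absurd (Finset.mem_range.mpr (by omega)) habs
    · rw [if_neg h]
      exact Finset.sum_eq_zero fun i _ => by rw [if_neg (by omega)]
  rw [← hcoeff, hprod, hX2]

lemma legendre_zero (n : ℕ) :
    legendreP n 0 = if n % 2 = 0 then (-1:ℝ)^(n/2) * cc (n/2) else 0 := by
  have h1 : legendreP n 0 = (1/2:ℝ)^n *
      ∑ ij ∈ Finset.HasAntidiagonal.antidiagonal n, (-1:ℝ)^ij.2 * (n.choose ij.1) * (n.choose ij.2) := by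
    rw [legendre_zero_sum]
    have hv : ∀ k, ((n+k).choose k : ℝ)
        = ∑ ij ∈ Finset.HasAntidiagonal.antidiagonal n, (n.choose ij.1 : ℝ) * (k.choose ij.2 : ℝ) := by
      intro k
      have h := Nat.add_choose_eq n k n
      have hsymm : (n+k).choose k = (n+k).choose n := (Nat.choose_symm_add).symm
      rw [hsymm, h]
      push_cast
      rfl
    have hstep : ∀ k ∈ range (n+1), (-1:ℝ)^k * (n.choose k) * ((n+k).choose k) * (1/2)^k
        = ∑ ij ∈ Finset.HasAntidiagonal.antidiagonal n,
            (n.choose ij.1 : ℝ) * ((-1:ℝ)^k * (n.choose k) * (k.choose ij.2) * (1/2)^k) := by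
      intro k _
      rw [show (-1:ℝ)^k * (n.choose k) * ((n+k).choose k) * (1/2)^k
          = ((n+k).choose k : ℝ) * ((-1:ℝ)^k * (n.choose k) * (1/2)^k) by ring, hv k,
        Finset.sum_mul]
      refine Finset.sum_congr rfl fun ij _ => by ring
    rw [Finset.sum_congr rfl hstep, Finset.sum_comm, Finset.mul_sum]
    refine Finset.sum_congr rfl fun ij hij => ?_
    have hj : ij.2 ≤ n := by
      have := Finset.HasAntidiagonal.mem_antidiagonal.mp hij; omega
    rw [← Finset.mul_sum, innerSumAux n ij.2 hj]
    ring
  rw [h1, alt_sq_sum]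
  by_cases h : n % 2 = 0
  · rw [if_pos h, if_pos h]
    have he : 2 * (n/2) = n := by omega
    have hcc : cc (n/2) = (n.choose (n/2) : ℝ) / 4^(n/2) := by
      rw [cc, Nat.centralBinom, he]
    rw [hcc]
    have h4 : (4:ℝ)^(n/2) ≠ 0 := by positivity
    have hhalf : (1/2:ℝ)^n = ((4:ℝ)^(n/2))⁻¹ := by
      rw [show (4:ℝ) = 2^2 by norm_num, ← pow_mul, he]
      simp [div_pow]
    rw [hhalf]
    field_simp
  · rw [if_neg h, if_neg h, mul_zero]

lemma legendre_sq (n : ℕ) :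
    legendreP n 0 ^ 2 = if n % 2 = 0 then cc (n/2) ^ 2 else 0 := by
  rw [legendre_zero]
  by_cases h : n % 2 = 0
  · rw [if_pos h, if_pos h, mul_pow, ← pow_mul, mul_comm (n/2) 2, pow_mul]
    norm_num
  · rw [if_neg h, if_neg h]
    norm_num

lemma cc_sq_le_one (m : ℕ) : cc m ^ 2 ≤ 1 := by
  have h1 := cc_le_one m
  have h2 := (cc_pos m).le
  nlinarith

lemma legendre_sq_le (n : ℕ) : legendreP n 0 ^ 2 ≤ 1 := by
  rw [legendre_sq]; split
  · exact cc_sq_le_one _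
  · norm_num

lemma hrp_nonneg (n : ℕ) : 0 ≤ hadamardReturnProbTime n := by
  unfold hadamardReturnProbTime
  split
  · norm_num
  split
  · positivity
  · exact le_refl 0

lemma hrp_le_one (n : ℕ) : hadamardReturnProbTime n ≤ 1 := by
  unfold hadamardReturnProbTime
  split
  · exact le_refl 1
  split
  · have := legendre_sq_le (n/2-1); have := legendre_sq_le (n/2); linarith
  · norm_num

lemma hrp_odd (k : ℕ) : hadamardReturnProbTime (2*k+1) = 0 := by
  unfold hadamardReturnProbTime
  rw [if_neg (by omega), if_neg (by omega)]

lemma hrp_zero : hadamardReturnProbTime 0 = 1 := by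
  unfold hadamardReturnProbTime; rw [if_pos rfl]

lemma hrp_four (m : ℕ) (hm : m ≠ 0) : hadamardReturnProbTime (4*m) = 1/2 * cc m ^ 2 := by
  unfold hadamardReturnProbTime
  rw [if_neg (by omega), if_pos (by omega)]
  have h1 : 4*m/2 = 2*m := by omega
  have h2 : 4*m/2 - 1 = 2*(m-1)+1 := by omega
  rw [h1, show 2*m - 1 = 2*(m-1)+1 by omega, legendre_sq, legendre_sq,
    if_neg (by omega), if_pos (by omega), show 2*m/2 = m by omega]
  ring

lemma hrp_four_two (m : ℕ) : hadamardReturnProbTime (4*m+2) = 1/2 * cc m ^ 2 := by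
  unfold hadamardReturnProbTime
  rw [if_neg (by omega), if_pos (by omega)]
  have h1 : (4*m+2)/2 = 2*m+1 := by omega
  have h2 : (4*m+2)/2 - 1 = 2*m := by omega
  rw [h1, show 2*m+1-1 = 2*m by omega, legendre_sq, legendre_sq,
    if_pos (by omega), if_neg (by omega), show 2*m/2 = m by omega]
  ring


theorem hadamard_return_genfun (z : ℝ) (h0 : 0 ≤ z) (h1 : z < 1) :
    ∑' n : ℕ, hadamardReturnProbTime n * z ^ n =
      ((1 + z ^ 2) / Real.pi) * ellipticK (z ^ 2) + 1 / 2 := by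
  set q : ℕ → ℝ := fun n => hadamardReturnProbTime n * z ^ n with hq
  have hqn : ∀ n, 0 ≤ q n := fun n => mul_nonneg (hrp_nonneg n) (by positivity)
  have hqle : ∀ n, q n ≤ z ^ n := fun n => by
    have := hrp_le_one n
    have hz : (0:ℝ) ≤ z ^ n := by positivity
    calc q n = hadamardReturnProbTime n * z ^ n := rfl
      _ ≤ 1 * z ^ n := mul_le_mul_of_nonneg_right (hrp_le_one n) hz
      _ = z ^ n := one_mul _
  have hsq : Summable q :=
    Summable.of_nonneg_of_le hqn hqle (summable_geometric_of_lt_one h0 h1)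
  -- reindex by (m, r) ↦ 4m + r
  have hsq' : Summable fun p : ℕ × Fin 4 => q (p.1 * 4 + (p.2 : ℕ)) := by
    have := ((Nat.divModEquiv 4).symm.summable_iff (f := q)).mpr hsq
    simpa [Nat.divModEquiv, Function.comp_def] using this
  have h1' : ∑' n, q n = ∑' (p : ℕ × Fin 4), q (p.1 * 4 + (p.2 : ℕ)) := by
    have := Equiv.tsum_eq (Nat.divModEquiv 4).symm q
    simp only [Nat.divModEquiv, Equiv.coe_fn_symm_mk] at this
    exact this.symm
  have h2 : ∑' (p : ℕ × Fin 4), q (p.1 * 4 + (p.2 : ℕ))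
      = ∑' m : ℕ, ∑' r : Fin 4, q (m * 4 + (r : ℕ)) := Summable.tsum_prod' hsq' fun _ => .of_finite
  have h3 : ∀ m : ℕ, (∑' r : Fin 4, q (m * 4 + (r : ℕ)))
      = 1/2*(1+z^2)*(cc m^2 * (z^4)^m) + (if m = 0 then (1/2:ℝ) else 0) := by
    intro m
    rw [tsum_fintype, Fin.sum_univ_four]
    have e0 : ((0 : Fin 4) : ℕ) = 0 := rfl
    have e1 : ((1 : Fin 4) : ℕ) = 1 := rfl
    have e2 : ((2 : Fin 4) : ℕ) = 2 := rfl
    have e3 : ((3 : Fin 4) : ℕ) = 3 := rfl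
    rw [e0, e1, e2, e3]
    have hodd1 : q (m*4+1) = 0 := by
      rw [hq]; simp only
      rw [show m*4+1 = 2*(2*m)+1 by ring, hrp_odd, zero_mul]
    have hodd3 : q (m*4+3) = 0 := by
      rw [hq]; simp only
      rw [show m*4+3 = 2*(2*m+1)+1 by ring, hrp_odd, zero_mul]
    have h42 : q (m*4+2) = 1/2 * cc m^2 * z^(4*m+2) := by
      rw [hq]; simp only
      rw [show m*4+2 = 4*m+2 by ring, hrp_four_two]
    rw [hodd1, hodd3, h42]
    rcases Nat.eq_zero_or_pos m with hm | hm
    · subst hm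
      have h00 : q (0*4+0) = 1 := by
        rw [hq]; simp only; norm_num [hrp_zero]
      rw [h00, if_pos rfl, cc_zero]
      norm_num
      ring
    · have h40 : q (m*4+0) = 1/2 * cc m^2 * z^(4*m) := by
        rw [hq]; simp only
        rw [show m*4+0 = 4*m by ring, hrp_four m (by omega)]
      rw [h40, if_neg (by omega)]
      rw [show z^(4*m+2) = (z^4)^m * z^2 by rw [pow_add, pow_mul],
        show z^(4*m) = (z^4)^m by rw [pow_mul]]
      ring
  have hz4 : (0:ℝ) ≤ z^4 := by positivity
  have hz41 : z^4 < 1 := pow_lt_one₀ h0 h1 (by norm_num)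
  have hS1 : Summable (fun m : ℕ => 1/2*(1+z^2)*(cc m^2 * (z^4)^m)) := by
    apply Summable.mul_left
    refine Summable.of_nonneg_of_le
      (fun m => mul_nonneg (sq_nonneg _) (by positivity))
      (fun m => ?_) (summable_geometric_of_lt_one hz4 hz41)
    have h := cc_sq_le_one m
    have hzp : (0:ℝ) ≤ (z^4)^m := by positivity
    nlinarith
  have hS2 : Summable (fun m : ℕ => if m = 0 then (1/2:ℝ) else 0) :=
    (hasSum_ite_eq 0 (1/2:ℝ)).summable
  have h4 : ∑' m : ℕ, (1/2*(1+z^2)*(cc m^2 * (z^4)^m) + (if m = 0 then (1/2:ℝ) else 0))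
      = 1/2*(1+z^2) * (∑' m : ℕ, cc m^2 * (z^4)^m) + 1/2 := by
    rw [Summable.tsum_add hS1 hS2, tsum_mul_left, tsum_ite_eq]
  have hK : ellipticK (z^2) = Real.pi/2 * ∑' m : ℕ, cc m ^ 2 * (z^4) ^ m := by
    rw [ellipticK]
    rw [show ((z^2)^2 : ℝ) = z^4 by ring]
    exact keyK hz4 hz41
  rw [h1', h2]
  rw [tsum_congr h3, h4, hK]
  have hpi := Real.pi_ne_zero
  field_simp
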